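/- Let 0 < x, x' < 1 and let F = ⟨{w},R⟩ and F' = ⟨{w'},R'⟩ be the one-point fuzzy frames with R(w,w) = x and R'(w',w') = x'. Then for every formula φ of L_{Δ,□,◇}: φ is KbiG-valid on F if and only if φ is KbiG-valid on F'. -/

import Mathlib

noncomputable def Gimp (x y : ℝ) : ℝ := if x ≤ y then 1 else y

inductive BFml : Type
  | var : ℕ → BFml
  | and : BFml → BFml → BFml
  | or : BFml → BFml → BFml
  | imp : BFml → BFml → BFml
  | snot : BFml → BFml
  | delta : BFml → BFml
  | box : BFml → BFml
  | dia : BFml → BFml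

noncomputable def BFml.eval {W : Type} (R : W → W → ℝ) (v : ℕ → W → ℝ) : BFml → W → ℝ
  | .var p, w => v p w
  | .and φ χ, w => min (BFml.eval R v φ w) (BFml.eval R v χ w)
  | .or φ χ, w => max (BFml.eval R v φ w) (BFml.eval R v χ w)
  | .imp φ χ, w => Gimp (BFml.eval R v φ w) (BFml.eval R v χ w)
  | .snot φ, w => if BFml.eval R v φ w = 0 then 1 else 0
  | .delta φ, w => if BFml.eval R v φ w = 1 then 1 else 0
  | .box φ, w => sInf (Set.range fun w' => Gimp (R w w') (BFml.eval R v φ w'))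
  | .dia φ, w => sSup (Set.range fun w' => min (R w w') (BFml.eval R v φ w'))

def KbiGValid {W : Type} (R : W → W → ℝ) (φ : BFml) : Prop :=
  ∀ v : ℕ → W → ℝ, (∀ p w, v p w ∈ Set.Icc (0:ℝ) 1) → ∀ w : W, BFml.eval R v φ w = 1

noncomputable def hmap (x x' t : ℝ) : ℝ :=
  if t ≤ x then t * (x' / x) else x' + (t - x) * ((1 - x') / (1 - x))

lemma hmap_strictMono {x x' : ℝ} (hx0 : 0 < x) (hx1 : x < 1) (hx'0 : 0 < x') (hx'1 : x' < 1) :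
    StrictMono (hmap x x') := by
  intro s t hst
  have hc1 : 0 < x' / x := div_pos hx'0 hx0
  have hc2 : 0 < (1 - x') / (1 - x) := div_pos (by linarith) (by linarith)
  have hxx : x * (x' / x) = x' := by field_simp
  unfold hmap
  split_ifs with hs ht ht
  · exact mul_lt_mul_of_pos_right hst hc1
  · have h1 : s * (x' / x) ≤ x' := by nlinarith
    nlinarith
  · linarith
  · nlinarith

lemma hmap_zero {x x' : ℝ} (hx0 : 0 < x) : hmap x x' 0 = 0 := by
  simp [hmap, hx0.le]

lemma hmap_one {x x' : ℝ} (hx1 : x < 1) : hmap x x' 1 = 1 := by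
  have hne : (1:ℝ) - x ≠ 0 := by linarith
  rw [hmap, if_neg (by linarith)]
  field_simp
  ring

lemma hmap_x {x x' : ℝ} (hx0 : 0 < x) : hmap x x' x = x' := by
  rw [hmap, if_pos le_rfl]
  field_simp

lemma range_punit (f : PUnit → ℝ) : Set.range f = {f PUnit.unit} := by
  rw [Set.range_unique]

lemma hmap_Gimp {x x' : ℝ} (hx0 : 0 < x) (hx1 : x < 1) (hx'0 : 0 < x') (hx'1 : x' < 1)
    (a b : ℝ) : Gimp (hmap x x' a) (hmap x x' b) = hmap x x' (Gimp a b) := by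
  have hm := hmap_strictMono hx0 hx1 hx'0 hx'1
  unfold Gimp
  by_cases hab : a ≤ b
  · rw [if_pos ((hm.le_iff_le).mpr hab), if_pos hab, hmap_one hx1]
  · rw [if_neg (fun h => hab ((hm.le_iff_le).mp h)), if_neg hab]

lemma eval_hmap {x x' : ℝ} (hx0 : 0 < x) (hx1 : x < 1) (hx'0 : 0 < x') (hx'1 : x' < 1)
    (v : ℕ → PUnit → ℝ) (φ : BFml) (w : PUnit) :
    BFml.eval (fun _ _ : PUnit => x') (fun p w => hmap x x' (v p w)) φ w
      = hmap x x' (BFml.eval (fun _ _ : PUnit => x) v φ w) := by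
  have hm := hmap_strictMono hx0 hx1 hx'0 hx'1
  induction φ generalizing w with
  | var p => rfl
  | and φ χ ihφ ihχ =>
    simp only [BFml.eval, ihφ, ihχ]
    exact (hm.monotone.map_min).symm
  | or φ χ ihφ ihχ =>
    simp only [BFml.eval, ihφ, ihχ]
    exact (hm.monotone.map_max).symm
  | imp φ χ ihφ ihχ =>
    simp only [BFml.eval, ihφ, ihχ, hmap_Gimp hx0 hx1 hx'0 hx'1]
  | snot φ ihφ =>
    simp only [BFml.eval, ihφ]
    by_cases h0 : BFml.eval (fun _ _ : PUnit => x) v φ w = 0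
    · rw [if_pos (by rw [h0, hmap_zero hx0]), if_pos h0, hmap_one hx1]
    · rw [if_neg (fun h => h0 (hm.injective (by rw [h, hmap_zero hx0]))), if_neg h0,
        hmap_zero hx0]
  | delta φ ihφ =>
    simp only [BFml.eval, ihφ]
    by_cases h1 : BFml.eval (fun _ _ : PUnit => x) v φ w = 1
    · rw [if_pos (by rw [h1, hmap_one hx1]), if_pos h1, hmap_one hx1]
    · rw [if_neg (fun h => h1 (hm.injective (by rw [h, hmap_one hx1]))), if_neg h1,
        hmap_zero hx0]
  | box φ ihφ =>
    simp only [BFml.eval, range_punit, csInf_singleton, ihφ]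
    rw [← hmap_Gimp hx0 hx1 hx'0 hx'1, hmap_x hx0]
  | dia φ ihφ =>
    simp only [BFml.eval, range_punit, csSup_singleton, ihφ]
    rw [hm.monotone.map_min, hmap_x hx0]

lemma valid_transfer {x x' : ℝ} (hx0 : 0 < x) (hx1 : x < 1) (hx'0 : 0 < x') (hx'1 : x' < 1)
    (φ : BFml) (H : KbiGValid (fun _ _ : PUnit => x') φ) :
    KbiGValid (fun _ _ : PUnit => x) φ := by
  intro v hv w
  have hm := hmap_strictMono hx0 hx1 hx'0 hx'1
  have hv' : ∀ p w, hmap x x' (v p w) ∈ Set.Icc (0:ℝ) 1 := by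
    intro p w
    obtain ⟨h1, h2⟩ := hv p w
    constructor
    · rw [← hmap_zero (x' := x') hx0]; exact hm.monotone h1
    · rw [← hmap_one (x' := x') hx1]; exact hm.monotone h2
  have := H (fun p w => hmap x x' (v p w)) hv' w
  rw [eval_hmap hx0 hx1 hx'0 hx'1] at this
  rw [← hmap_one (x := x) (x' := x') hx1] at this
  exact hm.injective this

theorem statement7 (x x' : ℝ) (hx0 : 0 < x) (hx1 : x < 1) (hx'0 : 0 < x') (hx'1 : x' < 1)
    (φ : BFml) :
    KbiGValid (fun _ _ : PUnit => x) φ ↔ KbiGValid (fun _ _ : PUnit => x') φ := by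
  exact ⟨valid_transfer hx'0 hx'1 hx0 hx1 φ, valid_transfer hx0 hx1 hx'0 hx'1 φ⟩
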